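/- Let G be a finite connected simple graph with minimal degree at least 2 whose first Betti number b = |E(G)| - |V(G)| + 1 satisfies b ≥ 2. Then the edge adjacency matrix T of G is irreducible: for any two oriented edges d and f of G there exists an integer n ≥ 1 such that the (d, f) entry of Tⁿ is positive. -/

import Mathlib

/-- The type of oriented edges of a simple graph `G`: ordered pairs of adjacent vertices. -/
def SimpleGraph.orientedEdge {V : Type*} (G : SimpleGraph V) : Type _ :=
  {p : V × V // G.Adj p.1 p.2}

instance {V : Type*} [Fintype V] (G : SimpleGraph V) [DecidableRel G.Adj] :
    Fintype G.orientedEdge :=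
  Subtype.fintype fun p : V × V => G.Adj p.1 p.2

instance {V : Type*} [DecidableEq V] (G : SimpleGraph V) : DecidableEq G.orientedEdge :=
  fun d f => decidable_of_iff (d.val = f.val) Subtype.ext_iff.symm

/-- The edge adjacency matrix of `G`: rows and columns are indexed by oriented edges;
the `(d, f)` entry is `1` if the terminus of `d` is the origin of `f` and `f` is not the
inverse of `d`, and `0` otherwise. -/
def SimpleGraph.edgeAdjMatrix {V : Type*} [DecidableEq V] (G : SimpleGraph V) :
    Matrix G.orientedEdge G.orientedEdge ℝ :=
  fun d f => if d.val.2 = f.val.1 ∧ f.val ≠ (d.val.2, d.val.1) then 1 else 0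

namespace EAMaux

open Finset Relation

variable {V : Type*} [DecidableEq V] (G : SimpleGraph V)

/-- The non-backtracking step relation on oriented edges. -/
def Step (d f : G.orientedEdge) : Prop :=
  d.val.2 = f.val.1 ∧ f.val ≠ (d.val.2, d.val.1)

variable {G}

/-- Reversal of an oriented edge. -/
def rev (e : G.orientedEdge) : G.orientedEdge := ⟨(e.val.2, e.val.1), e.prop.symm⟩

lemma step_iff {d f : G.orientedEdge} :
    Step G d f ↔ d.val.2 = f.val.1 ∧ f.val.2 ≠ d.val.1 := by
  unfold Step
  constructor
  · rintro ⟨h1, h2⟩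
    refine ⟨h1, fun h => h2 ?_⟩
    exact Prod.ext (h1.symm) h
  · rintro ⟨h1, h2⟩
    refine ⟨h1, fun h => h2 ?_⟩
    rw [h]

lemma step_rev {d f : G.orientedEdge} (h : Step G d f) : Step G (rev f) (rev d) := by
  rw [step_iff] at h ⊢
  exact ⟨h.1.symm, fun hh => h.2 hh.symm⟩

lemma reflTransGen_rev {d f : G.orientedEdge}
    (h : ReflTransGen (Step G) d f) : ReflTransGen (Step G) (rev f) (rev d) := by
  induction h with
  | refl => exact .refl
  | tail _ hbc ih => exact ReflTransGen.head (step_rev hbc) ih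

lemma step_irrefl (e : G.orientedEdge) : ¬ Step G e e := by
  rintro ⟨h1, -⟩
  exact G.ne_of_adj e.prop h1.symm

lemma exists_step [Fintype V] [DecidableRel G.Adj] (hdeg : ∀ v, 2 ≤ G.degree v)
    (e : G.orientedEdge) : ∃ f, Step G e f := by
  have hcard : 1 < (G.neighborFinset e.val.2).card := by
    rw [G.card_neighborFinset_eq_degree]
    exact lt_of_lt_of_le one_lt_two (hdeg _)
  obtain ⟨y, hy, hne⟩ := Finset.exists_mem_ne hcard e.val.1
  rw [SimpleGraph.mem_neighborFinset] at hy
  exact ⟨⟨(e.val.2, y), hy⟩, step_iff.mpr ⟨rfl, hne⟩⟩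

/-- The key combinatorial theorem: the non-backtracking step relation is
strongly connected. -/
theorem transGen_step [Fintype V] [DecidableRel G.Adj] (hconn : G.Connected)
    (hdeg : ∀ v, 2 ≤ G.degree v) (hb : 2 ≤ G.edgeFinset.card - Fintype.card V + 1)
    (d f : G.orientedEdge) : TransGen (Step G) d f := by
  classical
  -- pick an oriented edge whose reachable set is minimal: it generates a "sink SCC"
  obtain ⟨m, -, hm⟩ := Finset.exists_min_image (univ : Finset G.orientedEdge)
      (fun e => (univ.filter (fun x => ReflTransGen (Step G) e x)).card) ⟨d, mem_univ d⟩
  set K : G.orientedEdge → Prop := fun x => ReflTransGen (Step G) m x with hKdef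
  have key : ∀ x, K x → ReflTransGen (Step G) x m := by
    intro x hx
    have hsub : (univ.filter (fun y => ReflTransGen (Step G) x y)) ⊆
        (univ.filter (fun y => ReflTransGen (Step G) m y)) := by
      intro y hy
      simp only [mem_filter, mem_univ, true_and] at hy ⊢
      exact hx.trans hy
    have heq := Finset.eq_of_subset_of_card_le hsub (hm x (mem_univ x))
    have hmem : m ∈ univ.filter (fun y => ReflTransGen (Step G) x y) := by
      rw [heq]; exact mem_filter.mpr ⟨mem_univ m, ReflTransGen.refl⟩
    simpa using hmem
  have ksucc : ∀ x y, K x → Step G x y → K y := fun x y hx h => hx.tail h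
  have kpred : ∀ x, K x → ∃ z, K z ∧ Step G z x := by
    intro x hx
    obtain ⟨y, hy⟩ := exists_step hdeg x
    have hKy : K y := ksucc _ _ hx hy
    have hyx : ReflTransGen (Step G) y x := (key y hKy).trans hx
    have hne : x ≠ y := by rintro rfl; exact step_irrefl x hy
    have htg : TransGen (Step G) y x :=
      (Relation.reflTransGen_iff_eq_or_transGen.mp hyx).resolve_left hne
    obtain ⟨z, hz1, hz2⟩ := Relation.TransGen.tail'_iff.mp htg
    exact ⟨z, hKy.trans hz1, hz2⟩
  -- connectivity induction helper
  have walkind : ∀ (P : V → Prop), (∀ u w, P u → G.Adj u w → P w) →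
      ∀ u w, G.Walk u w → P u → P w := by
    intro P hstep u w p
    induction p with
    | nil => exact id
    | cons h _ ih => intro ha; exact ih (hstep _ _ ha h)
  by_cases hcase : ∃ e, K e ∧ K (rev e)
  · -- K is closed under reversal, hence contains every oriented edge
    obtain ⟨e, he, hre⟩ := hcase
    have krev : ∀ x, K x → K (rev x) := by
      intro x hx
      exact hre.trans (reflTransGen_rev ((key x hx).trans he))
    set P : V → Prop := fun v => ∀ y, (h : G.Adj v y) → K ⟨(v, y), h⟩ with hPdef
    have hbase : P e.val.2 := by
      intro y h
      by_cases hy : y = e.val.1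
      · subst hy
        have : (⟨(e.val.2, e.val.1), h⟩ : G.orientedEdge) = rev e := rfl
        rw [this]; exact hre
      · exact ksucc e _ he (step_iff.mpr ⟨rfl, hy⟩)
    have hind : ∀ u w, P u → G.Adj u w → P w := by
      intro u w hu h y hy
      by_cases hyu : y = u
      · subst hyu
        have : (⟨(w, y), hy⟩ : G.orientedEdge) = rev ⟨(y, w), h⟩ := rfl
        rw [this]; exact krev _ (hu w h)
      · exact ksucc ⟨(u, w), h⟩ _ (hu w h) (step_iff.mpr ⟨rfl, hyu⟩)
    have hPall : ∀ v, P v := by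
      intro v
      obtain ⟨p⟩ := hconn.preconnected e.val.2 v
      exact walkind P hind _ _ p hbase
    have hKx : ∀ x : G.orientedEdge, K x := by
      intro x
      exact hPall x.val.1 x.val.2 x.prop
    obtain ⟨g, hg⟩ := exists_step hdeg d
    exact TransGen.head' hg ((key g (hKx g)).trans (hKx f))
  · -- otherwise a counting argument contradicts the Betti number hypothesis
    exfalso
    push_neg at hcase
    have huniq : ∀ (x y : G.orientedEdge), K x → K y → x.val.2 = y.val.2 → x = y := by
      intro x y hx hy h2
      by_contra hne
      have h1 : y.val.1 ≠ x.val.1 := by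
        intro h1
        exact hne (Subtype.ext (Prod.ext h1.symm h2))
      have hs : Step G x (rev y) := step_iff.mpr ⟨h2, h1⟩
      exact hcase y hy (ksucc x _ hx hs)
    set KF : Finset G.orientedEdge := univ.filter K with hKF
    have hKFmem : ∀ x, x ∈ KF ↔ K x := by intro x; simp [hKF]
    set Inn : V → Finset G.orientedEdge := fun v => KF.filter (fun e => e.val.2 = v)
      with hInn
    set Outt : V → Finset G.orientedEdge := fun v => KF.filter (fun e => e.val.1 = v)
      with hOutt
    set W : Finset V := univ.filter (fun v => (Inn v).Nonempty) with hW
    have hInn_card : ∀ v, (Inn v).card ≤ 1 := by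
      intro v
      refine Finset.card_le_one.mpr ?_
      intro a ha b hb
      simp only [hInn, mem_filter, hKFmem] at ha hb
      exact huniq a b ha.1 hb.1 (ha.2.trans hb.2.symm)
    have h1 : KF.card = ∑ v ∈ univ, (Inn v).card :=
      Finset.card_eq_sum_card_fiberwise (fun e _ => mem_univ (e.val.2))
    have h2 : KF.card = ∑ v ∈ univ, (Outt v).card :=
      Finset.card_eq_sum_card_fiberwise (fun e _ => mem_univ (e.val.1))
    have hsum1 : ∑ v ∈ univ, (Inn v).card = ∑ v ∈ W, (Inn v).card := by
      refine (Finset.sum_subset (subset_univ W) ?_).symm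
      intro v _ hv
      simp only [hW, mem_filter, mem_univ, true_and] at hv
      rw [Finset.card_eq_zero, ← Finset.not_nonempty_iff_eq_empty]
      exact hv
    have hOutW : ∀ v, (Outt v).Nonempty → v ∈ W := by
      rintro v ⟨e, he⟩
      simp only [hOutt, mem_filter] at he
      obtain ⟨z, hKz, hz⟩ := kpred e ((hKFmem e).mp he.1)
      simp only [hW, mem_filter, mem_univ, true_and]
      refine ⟨z, ?_⟩
      simp only [hInn, mem_filter, hKFmem]
      exact ⟨hKz, hz.1.trans he.2⟩
    have hsum2 : ∑ v ∈ univ, (Outt v).card = ∑ v ∈ W, (Outt v).card := by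
      refine (Finset.sum_subset (subset_univ W) ?_).symm
      intro v _ hv
      rw [Finset.card_eq_zero, ← Finset.not_nonempty_iff_eq_empty]
      exact fun hne => hv (hOutW v hne)
    have hlow : ∀ v ∈ W, G.degree v - 1 ≤ (Outt v).card := by
      intro v hv
      simp only [hW, mem_filter, mem_univ, true_and] at hv
      obtain ⟨e, he⟩ := hv
      simp only [hInn, mem_filter] at he
      obtain ⟨heKF, he2⟩ := he
      have hKe : K e := (hKFmem e).mp heKF
      have hadj : G.Adj v e.val.1 := he2 ▸ e.prop.symm
      have hmem1 : e.val.1 ∈ G.neighborFinset v := by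
        rw [SimpleGraph.mem_neighborFinset]; exact hadj
      have hcard : ((G.neighborFinset v).erase e.val.1).card = G.degree v - 1 := by
        rw [Finset.card_erase_of_mem hmem1, G.card_neighborFinset_eq_degree]
      rw [← hcard]
      refine Finset.card_le_card_of_injOn
          (fun y => if h : G.Adj v y then ⟨(v, y), h⟩ else e) ?_ ?_
      · intro y hy
        rw [Finset.mem_coe, Finset.mem_erase, SimpleGraph.mem_neighborFinset] at hy
        dsimp only
        erw [dif_pos hy.2]
        simp only [hOutt, Finset.mem_coe, mem_filter]
        exact mem_filter.mpr ⟨(hKFmem _).mpr (ksucc e _ hKe (step_iff.mpr ⟨he2, hy.1⟩)), rfl⟩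
      · intro y hy y' hy' hval
        simp only [Finset.coe_erase, Set.mem_diff, Set.mem_singleton_iff, Finset.mem_coe,
          SimpleGraph.mem_neighborFinset] at hy hy'
        dsimp only at hval
        erw [dif_pos hy.1, dif_pos hy'.1] at hval
        exact (Prod.ext_iff.mp (Subtype.ext_iff.mp hval)).2
    have cW : W.card = ∑ _v ∈ W, 1 := Finset.card_eq_sum_ones W
    have c1 : KF.card ≤ W.card := by
      rw [h1, hsum1, cW]
      exact Finset.sum_le_sum (fun v _ => hInn_card v)
    have c2 : ∑ v ∈ W, (G.degree v - 1) ≤ KF.card := by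
      rw [h2, hsum2]
      exact Finset.sum_le_sum hlow
    have c3 : ∀ v ∈ W, 1 ≤ G.degree v - 1 := by
      intro v _
      have := hdeg v
      omega
    have heqsum : ∑ _v ∈ W, 1 = ∑ v ∈ W, (G.degree v - 1) := by
      have hle1 : ∑ _v ∈ W, 1 ≤ ∑ v ∈ W, (G.degree v - 1) := Finset.sum_le_sum c3
      have hle2 : ∑ v ∈ W, (G.degree v - 1) ≤ ∑ _v ∈ W, 1 := by
        rw [← cW]; exact c2.trans c1
      omega
    have hdegW : ∀ v ∈ W, G.degree v = 2 := by
      have := (Finset.sum_eq_sum_iff_of_le c3).mp heqsum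
      intro v hv
      have h := this v hv
      have := hdeg v
      omega
    have hWadj : ∀ u w, u ∈ W → G.Adj u w → w ∈ W := by
      intro u w hu h
      simp only [hW, mem_filter, mem_univ, true_and] at hu ⊢
      obtain ⟨e, he⟩ := hu
      simp only [hInn, mem_filter] at he
      obtain ⟨heKF, he2⟩ := he
      have hKe : K e := (hKFmem e).mp heKF
      by_cases hw : w = e.val.1
      · obtain ⟨z, hKz, hz⟩ := kpred e hKe
        refine ⟨z, ?_⟩
        simp only [hInn, mem_filter]
        exact ⟨(hKFmem z).mpr hKz, by rw [hz.1, ← hw]⟩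
      · refine ⟨⟨(u, w), h⟩, ?_⟩
        simp only [hInn, mem_filter]
        exact mem_filter.mpr ⟨(hKFmem _).mpr (ksucc e _ hKe (step_iff.mpr ⟨he2, hw⟩)), rfl⟩
    have hWall : ∀ v, v ∈ W := by
      have hm2 : m.val.2 ∈ W := by
        simp only [hW, mem_filter, mem_univ, true_and]
        refine ⟨m, ?_⟩
        simp only [hInn, mem_filter]
        exact ⟨(hKFmem m).mpr ReflTransGen.refl, trivial⟩
      intro v
      obtain ⟨p⟩ := hconn.preconnected m.val.2 v
      exact walkind (· ∈ W) hWadj _ _ p hm2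
    have hdeg2 : ∀ v, G.degree v = 2 := fun v => hdegW v (hWall v)
    have hsumdeg : ∑ v, G.degree v = 2 * G.edgeFinset.card :=
      SimpleGraph.sum_degrees_eq_twice_card_edges G
    have hsum2' : ∑ v, G.degree v = 2 * Fintype.card V := by
      rw [Finset.sum_congr rfl (fun v _ => hdeg2 v), Finset.sum_const, smul_eq_mul,
        Fintype.card, mul_comm]
    have hE : G.edgeFinset.card = Fintype.card V := by omega
    omega

variable (G)

lemma entry_nonneg (d f : G.orientedEdge) : 0 ≤ G.edgeAdjMatrix d f := by
  unfold SimpleGraph.edgeAdjMatrix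
  split <;> norm_num

lemma pow_entry_nonneg [Fintype V] [DecidableRel G.Adj] (n : ℕ)
    (d f : G.orientedEdge) : 0 ≤ (G.edgeAdjMatrix ^ n) d f := by
  induction n generalizing d f with
  | zero =>
    rw [pow_zero, Matrix.one_apply]
    split <;> norm_num
  | succ n ih =>
    rw [pow_succ, Matrix.mul_apply]
    exact Finset.sum_nonneg fun g _ => mul_nonneg (ih d g) (entry_nonneg G g f)

variable {G}

lemma step_entry {d f : G.orientedEdge} (h : Step G d f) : G.edgeAdjMatrix d f = 1 :=
  if_pos h

end EAMaux

/-- if `G` is a finite connected simple graph of minimal degree at least 2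
with first Betti number `b = |E| - |V| + 1 ≥ 2`, then the edge adjacency matrix of `G` is
irreducible: for any oriented edges `d, f` some power `Tⁿ` (`n ≥ 1`) has positive `(d, f)`
entry. -/
theorem edgeAdjMatrix_irreducible {V : Type*} [Fintype V] [DecidableEq V]
    (G : SimpleGraph V) [DecidableRel G.Adj]
    (hconn : G.Connected) (hdeg : ∀ v, 2 ≤ G.degree v)
    (hb : 2 ≤ G.edgeFinset.card - Fintype.card V + 1) :
    ∀ d f : G.orientedEdge, ∃ n : ℕ, 1 ≤ n ∧ 0 < (G.edgeAdjMatrix ^ n) d f := by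
  intro d f
  have htg := EAMaux.transGen_step hconn hdeg hb d f
  induction htg with
  | single h =>
    exact ⟨1, le_refl 1, by rw [pow_one, EAMaux.step_entry h]; norm_num⟩
  | @tail b c _ hstep ih =>
    obtain ⟨n, hn1, hpos⟩ := ih
    refine ⟨n + 1, by omega, ?_⟩
    rw [pow_succ, Matrix.mul_apply]
    have hterm : 0 < (G.edgeAdjMatrix ^ n) d b * G.edgeAdjMatrix b c := by
      rw [EAMaux.step_entry hstep, mul_one]; exact hpos
    refine lt_of_lt_of_le hterm ?_
    exact Finset.single_le_sum
      (fun g _ => mul_nonneg (EAMaux.pow_entry_nonneg G n d g) (EAMaux.entry_nonneg G g c))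
      (Finset.mem_univ b)
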